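/- For i ∉ J (or j ∉ J) and k distinct from i and j, the cylindric axiom C6 holds in IFG power set algebras: C_{k,J}(D_{ik} ·_∅ D_{kj}) = D_{ij}. -/

import Mathlib

/-- Two valuations agree outside `J`: they take the same values on all coordinates not in `J`. -/
def AgreeOutside {ι A : Type*} (J : Set ι) (a b : ι → A) : Prop :=
  ∀ i, i ∉ J → a i = b i

/-- `𝒰` is a `J`-saturated disjoint cover of `V`. -/
def IsSatDisjCover {ι A : Type*} (J : Set ι) (V : Set (ι → A))
    (𝒰 : Set (Set (ι → A))) : Prop :=
  ⋃₀ 𝒰 = V ∧ 𝒰.Pairwise Disjoint ∧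
    ∀ a ∈ V, ∀ b ∈ V, AgreeOutside J a b → ∀ U ∈ 𝒰, a ∈ U → b ∈ U

/-- `V = V₁ ∪_J V₂`: a `J`-saturated disjoint (binary) cover of `V`. -/
def UnionJ {ι A : Type*} (J : Set ι) (V V₁ V₂ : Set (ι → A)) : Prop :=
  V₁ ∪ V₂ = V ∧ Disjoint V₁ V₂ ∧
    ∀ a ∈ V, ∀ b ∈ V, AgreeOutside J a b →
      ((a ∈ V₁ → b ∈ V₁) ∧ (a ∈ V₂ → b ∈ V₂))

/-- `f : V → A` is independent of `J`. -/
def IndepOf {ι A : Type*} (J : Set ι) (V : Set (ι → A)) (f : (ι → A) → A) : Prop :=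
  ∀ a ∈ V, ∀ b ∈ V, AgreeOutside J a b → f a = f b

/-- `V(n:f) = { ⃗a(n : f ⃗a) : ⃗a ∈ V }`. -/
def teamUpd {ι A : Type*} [DecidableEq ι] (n : ι) (f : (ι → A) → A)
    (V : Set (ι → A)) : Set (ι → A) :=
  (fun a => Function.update a n (f a)) '' V

/-- `V(n:A) = { ⃗a(n : c) : ⃗a ∈ V, c ∈ A }`. -/
def teamExp {ι A : Type*} [DecidableEq ι] (n : ι) (V : Set (ι → A)) : Set (ι → A) :=
  {x | ∃ a ∈ V, ∃ c : A, x = Function.update a n c}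

/-- An element of an IFG cylindric power set algebra: a pair `⟨X⁺, X⁻⟩` of sets of teams. -/
abbrev IFGElem (ι A : Type*) := Set (Set (ι → A)) × Set (Set (ι → A))

/-- Negation: `∼⟨X⁺, X⁻⟩ = ⟨X⁻, X⁺⟩`. -/
def ifgNeg {ι A : Type*} (X : IFGElem ι A) : IFGElem ι A := (X.2, X.1)

/-- `{V : V = V₁ ∪_J V₂ for some V₁ ∈ S, V₂ ∈ T}`. -/
def plusPos {ι A : Type*} (J : Set ι) (S T : Set (Set (ι → A))) : Set (Set (ι → A)) :=
  {V | ∃ V₁ ∈ S, ∃ V₂ ∈ T, UnionJ J V V₁ V₂}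

/-- The operation `X +_J Y`. -/
def ifgPlus {ι A : Type*} (J : Set ι) (X Y : IFGElem ι A) : IFGElem ι A :=
  (plusPos J X.1 Y.1, X.2 ∩ Y.2)

/-- The operation `X ·_J Y`. -/
def ifgTimes {ι A : Type*} (J : Set ι) (X Y : IFGElem ι A) : IFGElem ι A :=
  (X.1 ∩ Y.1, plusPos J X.2 Y.2)

/-- The cylindrification `C_{n,J}(X)`. -/
def ifgCyl {ι A : Type*} [DecidableEq ι] (n : ι) (J : Set ι) (X : IFGElem ι A) :
    IFGElem ι A :=
  ({V | ∃ f, IndepOf J V f ∧ teamUpd n f V ∈ X.1}, {W | teamExp n W ∈ X.2})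

/-- The constant `0`. -/
def ifgZero {ι A : Type*} : IFGElem ι A := ({∅}, Set.univ)

/-- The constant `1`. -/
def ifgOne {ι A : Type*} : IFGElem ι A := (Set.univ, {∅})

/-- The diagonal element `D_{ij}`. -/
def ifgD {ι A : Type*} (i j : ι) : IFGElem ι A :=
  ({V | ∀ a ∈ V, a i = a j}, {V | ∀ a ∈ V, a i ≠ a j})

/-- Cylindric axiom C6 for IFG power set algebras: if `i ∉ J` or `j ∉ J`, and
`k` is distinct from `i` and `j`, then `C_{k,J}(D_{ik} ·_∅ D_{kj}) = D_{ij}`. -/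
theorem cyl_diag_diag {ι A : Type*} [DecidableEq ι] (J : Set ι) (i j k : ι)
    (hJ : i ∉ J ∨ j ∉ J) (hik : i ≠ k) (hkj : k ≠ j) :
    ifgCyl k J (ifgTimes (∅ : Set ι) (ifgD i k) (ifgD k j)) = (ifgD i j : IFGElem ι A) := by
  apply Prod.ext
  · ext V
    simp only [ifgCyl, ifgTimes, ifgD, Set.mem_inter_iff, Set.mem_setOf_eq]
    constructor
    · rintro ⟨f, hf, h1, h2⟩ a ha
      have hm : Function.update a k (f a) ∈ teamUpd k f V := ⟨a, ha, rfl⟩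
      have e1 := h1 _ hm
      have e2 := h2 _ hm
      rw [Function.update_self] at e1 e2
      rw [Function.update_of_ne hik] at e1
      rw [Function.update_of_ne (Ne.symm hkj)] at e2
      exact e1.trans e2
    · intro hV
      refine ⟨fun a => a i, ?_, ?_, ?_⟩
      · intro a ha b hb hab
        rcases hJ with hi | hj
        · exact hab i hi
        · show a i = b i
          rw [hV a ha, hV b hb]; exact hab j hj
      · rintro x ⟨a, ha, rfl⟩
        simp only [Function.update_self, Function.update_of_ne hik]
      · rintro x ⟨a, ha, rfl⟩
        simp only [Function.update_self, Function.update_of_ne (Ne.symm hkj)]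
        exact hV a ha
  · ext W
    simp only [ifgCyl, ifgTimes, ifgD, plusPos, Set.mem_setOf_eq]
    constructor
    · rintro ⟨W1, h1, W2, h2, hU, hdisj, hsat⟩ a ha hij
      have hx : Function.update a k (a i) ∈ teamExp k W := ⟨a, ha, a i, rfl⟩
      rw [← hU] at hx
      rcases hx with hx | hx
      · exact h1 _ hx (by rw [Function.update_of_ne hik, Function.update_self])
      · exact h2 _ hx (by
          rw [Function.update_self, Function.update_of_ne (Ne.symm hkj), hij])
    · intro hW
      refine ⟨{x ∈ teamExp k W | x i ≠ x k}, ?_, {x ∈ teamExp k W | x i = x k}, ?_, ?_, ?_, ?_⟩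
      · intro x hx; exact hx.2
      · rintro x ⟨hmem, hxik⟩
        rcases hmem with ⟨a, ha, c, rfl⟩
        rw [Function.update_of_ne hik, Function.update_self] at hxik
        rw [Function.update_self, Function.update_of_ne (Ne.symm hkj), ← hxik]
        exact hW a ha
      · ext x
        constructor
        · rintro (hx | hx) <;> exact hx.1
        · intro hx
          by_cases h : x i = x k
          · exact Or.inr ⟨hx, h⟩
          · exact Or.inl ⟨hx, h⟩
      · rw [Set.disjoint_left]
        rintro x ⟨_, h⟩ ⟨_, h'⟩; exact h h'
      · intro a _ b _ hab
        have : a = b := funext fun x => hab x (Set.notMem_empty x)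
        subst this
        exact ⟨id, id⟩
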